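/- Let H be a separable analytic reproducing kernel Hilbert space of E-valued functions on 𝔻, with E ≠ {0}, on which the multiplication operator M_z is bounded, and suppose the kernel is quasi-scalar: there exist complex numbers a_{m,n} (m, n ∈ ℕ) such that ⟨K_{m,ζ}, K_{n,η}⟩_H = a_{m,n}·⟨ζ, η⟩_E for all ζ, η ∈ E. If the doubly indexed family (a_{m,n}/(n!·m!))_{n,m∈ℕ} is F-summable, then M_z* is chaotic on H. -/

import Mathlib

open Metric Filter ContinuousLinearMap

/-- A doubly indexed family `c : ℕ → ℕ → ℂ` is `F`-summable if for every `ε > 0` there is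
`N ∈ ℕ` such that `|∑_{n ∈ F} ∑_{m ∈ F} c n m| < ε` for every finite set
`F ⊆ {N, N+1, …}`. -/
def FSummable (c : ℕ → ℕ → ℂ) : Prop :=
  ∀ ε > (0 : ℝ), ∃ N : ℕ, ∀ F : Finset ℕ, (∀ n ∈ F, N ≤ n) →
    ‖∑ n ∈ F, ∑ m ∈ F, c n m‖ < ε

lemma birkhoff {X : Type*} [NormedAddCommGroup X] [NormedSpace ℂ X] [CompleteSpace X]
    [TopologicalSpace.SeparableSpace X] (T : X →L[ℂ] X)
    (htrans : ∀ U V : Set X, IsOpen U → IsOpen V → U.Nonempty → V.Nonempty →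
      ∃ m : ℕ, ∃ z ∈ U, (T ^ m) z ∈ V) :
    ∃ g : X, Dense (Set.range fun m : ℕ => (T ^ m) g) := by
  haveI : SecondCountableTopology X :=
    UniformSpace.secondCountable_of_separable X
  obtain ⟨B, hBc, -, hB⟩ := TopologicalSpace.exists_countable_basis X
  haveI : Countable B := hBc.to_subtype
  have hopen : ∀ V : B, IsOpen (⋃ m : ℕ, (T ^ m) ⁻¹' (V : Set X)) := fun V =>
    isOpen_iUnion fun m => ((T ^ m).continuous.isOpen_preimage _ (hB.isOpen V.2))
  have hdense : ∀ V : B, (V : Set X).Nonempty → Dense (⋃ m : ℕ, (T ^ m) ⁻¹' (V : Set X)) := by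
    intro V hV
    rw [dense_iff_inter_open]
    intro U hU hUne
    obtain ⟨m, z, hzU, hzV⟩ := htrans U V hU (hB.isOpen V.2) hUne hV
    exact ⟨z, hzU, Set.mem_iUnion.2 ⟨m, hzV⟩⟩
  -- restrict to nonempty basis sets
  classical
  have hd : Dense (⋂ V : B, if (V:Set X).Nonempty then (⋃ m : ℕ, (T ^ m) ⁻¹' (V : Set X)) else Set.univ) := by
    apply dense_iInter_of_isOpen
    · intro V; split_ifs
      · exact hopen V
      · exact isOpen_univ
    · intro V; split_ifs with h
      · exact hdense V h
      · exact dense_univ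
  obtain ⟨g, hg⟩ := hd.nonempty
  refine ⟨g, ?_⟩
  rw [dense_iff_inter_open]
  intro U hU hUne
  obtain ⟨x, hxU⟩ := hUne
  obtain ⟨V, hVB, hxV, hVU⟩ := hB.isOpen_iff.1 hU x hxU
  have := Set.mem_iInter.1 hg ⟨V, hVB⟩
  rw [if_pos ⟨x, hxV⟩] at this
  obtain ⟨m, hm⟩ := Set.mem_iUnion.1 this
  exact ⟨(T ^ m) g, hVU hm, Set.mem_range_self m⟩


lemma iterDeriv_smul {E : Type*} [NormedAddCommGroup E] [NormedSpace ℂ E]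
    (n : ℕ) (g : ℂ → E) (hg : ContDiffOn ℂ ⊤ g (ball (0:ℂ) 1)) :
    iteratedDerivWithin (n+1) (fun w => w • g w) (ball (0:ℂ) 1) 0
      = (n+1 : ℕ) • iteratedDerivWithin n g (ball (0:ℂ) 1) 0 := by
  have hball : IsOpen (ball (0:ℂ) 1) := isOpen_ball
  have hu : UniqueDiffOn ℂ (ball (0:ℂ) 1) := hball.uniqueDiffOn
  have h0 : (0:ℂ) ∈ ball (0:ℂ) 1 := by simp
  induction n generalizing g with
  | zero =>
    rw [iteratedDerivWithin_one]
    have : HasDerivWithinAt (fun w : ℂ => w • g w) ((0:ℂ) • derivWithin g (ball (0:ℂ) 1) 0 + (1:ℂ) • g 0) (ball (0:ℂ) 1) 0 :=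
      (hasDerivWithinAt_id (0:ℂ) _).smul
        ((hg.differentiableOn (by simp) 0 h0).hasDerivWithinAt)
    rw [this.derivWithin (hu.uniqueDiffWithinAt h0)]
    simp
  | succ n IH =>
    have hg' : ContDiffOn ℂ ⊤ (derivWithin g (ball (0:ℂ) 1)) (ball (0:ℂ) 1) :=
      hg.derivWithin hu (by exact le_top)
    have heq : Set.EqOn (derivWithin (fun w : ℂ => w • g w) (ball (0:ℂ) 1))
        (fun w : ℂ => g w + w • derivWithin g (ball (0:ℂ) 1) w) (ball (0:ℂ) 1) := by
      intro x hx
      have : HasDerivWithinAt (fun w : ℂ => w • g w)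
          (x • derivWithin g (ball (0:ℂ) 1) x + (1:ℂ) • g x) (ball (0:ℂ) 1) x :=
        (hasDerivWithinAt_id x _).smul
          ((hg.differentiableOn (by simp) x hx).hasDerivWithinAt)
      rw [this.derivWithin (hu.uniqueDiffWithinAt hx)]
      simp [add_comm]
    rw [iteratedDerivWithin_succ',
        iteratedDerivWithin_congr heq h0]
    have hadd : iteratedDerivWithin (n+1) (fun w : ℂ => g w + w • derivWithin g (ball (0:ℂ) 1) w) (ball (0:ℂ) 1) 0
        = iteratedDerivWithin (n+1) g (ball (0:ℂ) 1) 0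
          + iteratedDerivWithin (n+1) (fun w : ℂ => w • derivWithin g (ball (0:ℂ) 1) w) (ball (0:ℂ) 1) 0 := by
      have := iteratedDerivWithin_add (n := (n+1)) h0 hu ((hg.of_le le_top) 0 h0)
        (g := fun w : ℂ => w • derivWithin g (ball (0:ℂ) 1) w)
        (((contDiffOn_id.smul hg').of_le le_top) 0 h0)
      simpa [Pi.add_def] using this
    rw [hadd, IH _ hg', ← iteratedDerivWithin_succ']
    rw [succ_nsmul (iteratedDerivWithin (n + 1) g (ball (0:ℂ) 1) 0) (n+1)]
    abel

lemma iterDerivWithin_eq_global {E : Type*} [NormedAddCommGroup E] [NormedSpace ℂ E]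
    (n : ℕ) (g : ℂ → E) :
    iteratedDerivWithin n g (ball (0:ℂ) 1) 0 = iteratedDeriv n g 0 := by
  rw [iteratedDerivWithin_eq_iteratedFDerivWithin, iteratedDeriv_eq_iteratedFDeriv,
    iteratedFDerivWithin_of_isOpen n isOpen_ball (by simp : (0:ℂ) ∈ ball (0:ℂ) 1)]

lemma eq_zero_of_derivs_zero {E : Type*} [NormedAddCommGroup E] [NormedSpace ℂ E]
    [CompleteSpace E] (g : ℂ → E) (hg : DifferentiableOn ℂ g (ball (0:ℂ) 1))
    (hz : ∀ n : ℕ, iteratedDerivWithin n g (ball (0:ℂ) 1) 0 = 0) :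
    Set.EqOn g 0 (ball (0:ℂ) 1) := by
  intro z hz'
  have := Complex.hasSum_taylorSeries_on_ball hg hz'
  have h0 : ∀ n : ℕ, (n.factorial : ℂ)⁻¹ • (z - 0) ^ n • iteratedDeriv n g 0 = 0 := by
    intro n
    rw [← iterDerivWithin_eq_global, hz n, smul_zero, smul_zero]
  rw [funext h0] at this
  have := this.tsum_eq
  rw [tsum_zero] at this
  simpa using this.symm

set_option maxHeartbeats 2000000 in
/-- Quasi-scalar case, chaos: suppose the kernel of the analytic reproducing kernel
Hilbert space `H` of `E`-valued functions (`E ≠ 0`) is quasi-scalar, i.e.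
`⟨K_{m,ζ}, K_{n,η}⟩ = a m n · ⟨ζ, η⟩`, and `M_z` is bounded on `H`. If the family
`(a m n/(n!·m!))_{n,m}` is `F`-summable then `M_z*` is chaotic. -/
theorem stmt10 {H E : Type*}
    [NormedAddCommGroup H] [InnerProductSpace ℂ H] [CompleteSpace H]
    [TopologicalSpace.SeparableSpace H]
    [NormedAddCommGroup E] [InnerProductSpace ℂ E] [CompleteSpace E] [Nontrivial E]
    (ι : H →ₗ[ℂ] (ℂ → E))
    (hinj : ∀ f g : H, Set.EqOn (ι f) (ι g) (ball (0 : ℂ) 1) → f = g)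
    (hanal : ∀ f : H, DifferentiableOn ℂ (ι f) (ball (0 : ℂ) 1))
    (heval : ∀ w ∈ ball (0 : ℂ) 1, Continuous fun f : H => ι f w)
    (Mz : H →L[ℂ] H)
    (hMz : ∀ f : H, ∀ w ∈ ball (0 : ℂ) 1, ι (Mz f) w = w • ι f w)
    (K : ℕ → E → H)
    (hK : ∀ (n : ℕ) (η : E) (f : H),
      (inner ℂ f (K n η) : ℂ) =
        (inner ℂ (iteratedDerivWithin n (ι f) (ball (0 : ℂ) 1) 0) η : ℂ))
    (a : ℕ → ℕ → ℂ)
    (ha : ∀ (m n : ℕ) (ζ η : E),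
      (inner ℂ (K m ζ) (K n η) : ℂ) = a m n * (inner ℂ ζ η : ℂ))
    (hsum : FSummable (fun n m : ℕ => a m n / ((n.factorial : ℂ) * (m.factorial : ℂ)))) :
    (∃ g : H, Dense (Set.range fun m : ℕ => ((adjoint Mz) ^ m) g)) ∧
      Dense {y : H | ∃ k : ℕ, 1 ≤ k ∧ ((adjoint Mz) ^ k) y = y} := by
  classical
  have hu : UniqueDiffOn ℂ (ball (0:ℂ) 1) := isOpen_ball.uniqueDiffOn
  have h0 : (0:ℂ) ∈ ball (0:ℂ) 1 := by simp
  set T : H →L[ℂ] H := adjoint Mz with hTdef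
  have hsm : ∀ f : H, ContDiffOn ℂ ⊤ (ι f) (ball (0:ℂ) 1) := fun f =>
    ((hanal f).analyticOnNhd isOpen_ball).contDiffOn hu
  -- action of T on kernels
  have hT0 : ∀ ζ : E, T (K 0 ζ) = 0 := by
    intro ζ
    apply ext_inner_left ℂ
    intro f
    rw [hTdef, adjoint_inner_right, hK, inner_zero_right]
    have : iteratedDerivWithin 0 (ι (Mz f)) (ball (0:ℂ) 1) 0 = 0 := by
      rw [iteratedDerivWithin_zero, hMz f 0 h0, zero_smul]
    rw [this, inner_zero_left]
  have hTsucc : ∀ (n : ℕ) (ζ : E), T (K (n+1) ζ) = (((n:ℂ)+1)) • K n ζ := by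
    intro n ζ
    apply ext_inner_left ℂ
    intro f
    rw [hTdef, adjoint_inner_right, hK, inner_smul_right, hK]
    have hcongr : iteratedDerivWithin (n+1) (ι (Mz f)) (ball (0:ℂ) 1) 0
        = iteratedDerivWithin (n+1) (fun w => w • ι f w) (ball (0:ℂ) 1) 0 :=
      iteratedDerivWithin_congr (fun w hw => hMz f w hw) h0
    rw [hcongr, iterDeriv_smul n (ι f) (hsm f)]
    have : ((n+1 : ℕ) • iteratedDerivWithin n (ι f) (ball (0:ℂ) 1) 0)
        = (((n:ℂ)+1)) • iteratedDerivWithin n (ι f) (ball (0:ℂ) 1) 0 := by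
      rw [← Nat.cast_smul_eq_nsmul ℂ]; push_cast; ring_nf
    rw [this, inner_smul_left]
    simp
  -- normalized kernels
  set g : ℕ → E → H := fun n ζ => ((n.factorial : ℂ))⁻¹ • K n ζ with hgdef
  have hfacne : ∀ n : ℕ, ((n.factorial : ℂ)) ≠ 0 := by
    intro n; exact_mod_cast Nat.cast_ne_zero.2 (Nat.factorial_ne_zero n)
  have hKg : ∀ (n : ℕ) (ζ : E), K n ζ = (n.factorial : ℂ) • g n ζ := by
    intro n ζ; rw [hgdef]; simp [smul_smul, mul_inv_cancel₀ (hfacne n)]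
  have hTg0 : ∀ ζ : E, T (g 0 ζ) = 0 := by
    intro ζ; rw [hgdef]; simp only [map_smul, hT0, smul_zero]
  have hTgs : ∀ (n : ℕ) (ζ : E), T (g (n+1) ζ) = g n ζ := by
    intro n ζ
    rw [hgdef]
    simp only [map_smul, hTsucc]
    rw [smul_smul]
    congr 1
    rw [Nat.factorial_succ]
    have h1 : ((n:ℂ)+1) ≠ 0 := Nat.cast_add_one_ne_zero n
    push_cast
    rw [mul_inv_rev, mul_assoc, inv_mul_cancel₀ h1, mul_one]
  have hTpow : ∀ (k m : ℕ) (ζ : E), (T ^ k) (g (m + k) ζ) = g m ζ := by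
    intro k
    induction k with
    | zero => intro m ζ; simp
    | succ k IH =>
      intro m ζ
      have : (T ^ (k+1)) (g (m + (k+1)) ζ) = (T ^ k) (T (g (m + k + 1) ζ)) := by
        rw [pow_succ, mul_apply_eq_comp]
        ring_nf
      rw [this, hTgs, IH]
  have hTpow0 : ∀ (k n : ℕ), n < k → ∀ ζ : E, (T ^ k) (g n ζ) = 0 := by
    intro k
    induction k with
    | zero => intro n hn ζ; exact absurd hn (Nat.not_lt_zero n)
    | succ k IH =>
      intro n hn ζ
      rw [pow_succ, mul_apply_eq_comp]
      cases n with
      | zero => rw [hTg0, map_zero]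
      | succ m => rw [hTgs]; exact IH m (by omega) ζ
  -- norm identity
  have hnorm : ∀ (ζ : E) (F : Finset ℕ),
      ‖∑ n ∈ F, g n ζ‖^2
        = (∑ n ∈ F, ∑ m ∈ F, a m n / ((n.factorial : ℂ) * (m.factorial : ℂ))).re * ‖ζ‖^2 := by
    intro ζ F
    have hterm : ∀ n m : ℕ, (inner ℂ (g n ζ) (g m ζ) : ℂ)
        = (a n m / ((n.factorial : ℂ) * (m.factorial : ℂ))) * ((‖ζ‖^2 : ℝ) : ℂ) := by
      intro n m
      rw [hgdef]
      simp only [inner_smul_left, inner_smul_right, ha]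
      rw [inner_self_eq_norm_sq_to_K (𝕜 := ℂ) ζ]
      rw [map_inv₀, Complex.conj_natCast]
      push_cast
      field_simp
      rfl
    have key : (inner ℂ (∑ n ∈ F, g n ζ) (∑ m ∈ F, g m ζ) : ℂ)
        = (∑ n ∈ F, ∑ m ∈ F, a m n / ((n.factorial : ℂ) * (m.factorial : ℂ))) * ((‖ζ‖^2 : ℝ) : ℂ) := by
      calc (inner ℂ (∑ n ∈ F, g n ζ) (∑ m ∈ F, g m ζ) : ℂ)
          = ∑ n ∈ F, ∑ m ∈ F, (inner ℂ (g n ζ) (g m ζ) : ℂ) := by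
            rw [sum_inner]; exact Finset.sum_congr rfl fun n _ => inner_sum _ _ _
        _ = ∑ n ∈ F, ∑ m ∈ F, (a n m / ((n.factorial : ℂ) * (m.factorial : ℂ))) * ((‖ζ‖^2 : ℝ) : ℂ) :=
            Finset.sum_congr rfl fun n _ => Finset.sum_congr rfl fun m _ => hterm n m
        _ = (∑ n ∈ F, ∑ m ∈ F, a n m / ((n.factorial : ℂ) * (m.factorial : ℂ))) * ((‖ζ‖^2 : ℝ) : ℂ) := by
            simp only [Finset.sum_mul]
        _ = (∑ n ∈ F, ∑ m ∈ F, a m n / ((n.factorial : ℂ) * (m.factorial : ℂ))) * ((‖ζ‖^2 : ℝ) : ℂ) := by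
            congr 1
            rw [Finset.sum_comm]
            exact Finset.sum_congr rfl fun n _ => Finset.sum_congr rfl fun m _ => by
              rw [mul_comm ((n.factorial : ℂ)) ((m.factorial : ℂ))]
    have h2 : ‖∑ n ∈ F, g n ζ‖^2 = (inner ℂ (∑ n ∈ F, g n ζ) (∑ n ∈ F, g n ζ) : ℂ).re := by
      rw [← inner_self_eq_norm_sq (𝕜 := ℂ)]
      rfl
    rw [h2, key, Complex.mul_re]
    rw [Complex.ofReal_re, Complex.ofReal_im, mul_zero, sub_zero]
  -- uniform bound
  have hbound : ∀ ε : ℝ, 0 < ε → ∃ N : ℕ, ∀ (ζ : E) (F : Finset ℕ), (∀ n ∈ F, N ≤ n) →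
      ‖∑ n ∈ F, g n ζ‖^2 ≤ ε * ‖ζ‖^2 := by
    intro ε hε
    obtain ⟨N, hN⟩ := hsum ε hε
    refine ⟨N, fun ζ F hF => ?_⟩
    rw [hnorm]
    exact mul_le_mul_of_nonneg_right
      (le_trans (Complex.re_le_norm _) (le_of_lt (hN F hF))) (sq_nonneg _)
  have hgsmall : ∀ (ζ : E) (ε : ℝ), 0 < ε → ∃ N : ℕ, ∀ n, N ≤ n → ‖g n ζ‖ < ε := by
    intro ζ ε hε
    obtain ⟨N, hN⟩ := hbound (ε^2/(2*(‖ζ‖^2+1))) (by positivity)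
    refine ⟨N, fun n hn => ?_⟩
    have h1 := hN ζ {n} (by simpa using hn)
    rw [Finset.sum_singleton] at h1
    have hlt : ‖g n ζ‖^2 < ε^2 := by
      calc ‖g n ζ‖^2 ≤ ε^2/(2*(‖ζ‖^2+1)) * ‖ζ‖^2 := h1
        _ < ε^2 := by
          rw [div_mul_eq_mul_div, div_lt_iff₀ (by positivity)]
          nlinarith [sq_nonneg ‖ζ‖, sq_nonneg ε]
    nlinarith [norm_nonneg (g n ζ), hε, hlt]
  -- density of the span of kernels
  set P : Submodule ℂ H := Submodule.span ℂ {x : H | ∃ (n : ℕ) (ζ : E), x = K n ζ} with hPdef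
  have hKmem : ∀ (n : ℕ) (ζ : E), K n ζ ∈ P := fun n ζ => Submodule.subset_span ⟨n, ζ, rfl⟩
  have hgmem : ∀ (n : ℕ) (ζ : E), g n ζ ∈ P := fun n ζ => P.smul_mem _ (hKmem n ζ)
  have hPdense : Dense (P : Set H) := by
    rw [Submodule.dense_iff_topologicalClosure_eq_top, Submodule.topologicalClosure_eq_top_iff,
      Submodule.eq_bot_iff]
    intro x hx
    have hxK : ∀ (n : ℕ) (ζ : E), (inner ℂ x (K n ζ) : ℂ) = 0 := fun n ζ =>
      inner_eq_zero_symm.1 ((Submodule.mem_orthogonal P x).1 hx (K n ζ) (hKmem n ζ))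
    have hder : ∀ n : ℕ, iteratedDerivWithin n (ι x) (ball (0:ℂ) 1) 0 = 0 := by
      intro n
      exact inner_self_eq_zero.1 (((hK n _ x).symm.trans (hxK n _)))
    have hzero := eq_zero_of_derivs_zero (ι x) (hanal x) hder
    apply hinj x 0
    intro w hw
    rw [map_zero]
    exact hzero hw
  -- eventually annihilated
  have hΨ : ∀ u ∈ Submodule.span ℂ {x : H | ∃ (n : ℕ) (ζ : E), x = K n ζ},
      ∃ n₀ : ℕ, ∀ m, n₀ ≤ m → (T ^ m) u = 0 := by
    intro u hu'
    induction hu' using Submodule.span_induction with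
    | mem x hx =>
      obtain ⟨n, ζ, rfl⟩ := hx
      exact ⟨n+1, fun m hm => by
        rw [hKg n ζ, map_smul, hTpow0 m n (by omega) ζ, smul_zero]⟩
    | zero => exact ⟨0, fun m _ => map_zero _⟩
    | add x y hx hy ihx ihy =>
      obtain ⟨n₁, h1⟩ := ihx; obtain ⟨n₂, h2⟩ := ihy
      exact ⟨max n₁ n₂, fun m hm => by
        rw [map_add, h1 m (le_trans (le_max_left _ _) hm),
          h2 m (le_trans (le_max_right _ _) hm), add_zero]⟩
    | smul c x hx ihx =>
      obtain ⟨n₁, h1⟩ := ihx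
      exact ⟨n₁, fun m hm => by rw [map_smul, h1 m hm, smul_zero]⟩
  -- approximate backward orbits
  have hΦ : ∀ u ∈ Submodule.span ℂ {x : H | ∃ (n : ℕ) (ζ : E), x = K n ζ},
      ∀ ε : ℝ, 0 < ε → ∃ m₀ : ℕ, ∀ m, m₀ ≤ m → ∃ w : H, ‖w‖ < ε ∧ (T ^ m) w = u := by
    intro u hu'
    induction hu' using Submodule.span_induction with
    | mem x hx =>
      obtain ⟨n, ζ, rfl⟩ := hx
      intro ε hε
      obtain ⟨N, hN⟩ := hgsmall ζ (ε / ((n.factorial : ℝ) + 1)) (by positivity)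
      refine ⟨N, fun m hm => ?_⟩
      refine ⟨(n.factorial : ℂ) • g (n + m) ζ, ?_, ?_⟩
      · rw [norm_smul]
        have h1 : ‖g (n+m) ζ‖ < ε / ((n.factorial : ℝ) + 1) := hN _ (by omega)
        have h2 : ‖((n.factorial : ℕ) : ℂ)‖ = (n.factorial : ℝ) := by
          simp
        rw [h2]
        have h3 : ((n.factorial:ℝ)) * ‖g (n+m) ζ‖ ≤ ((n.factorial:ℝ)+1) * ‖g (n+m) ζ‖ := by
          nlinarith [norm_nonneg (g (n+m) ζ)]
        have h4 : ((n.factorial:ℝ)+1) * ‖g (n+m) ζ‖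
            < ((n.factorial:ℝ)+1) * (ε / ((n.factorial : ℝ) + 1)) :=
          mul_lt_mul_of_pos_left h1 (by positivity)
        have h5 : ((n.factorial:ℝ)+1) * (ε / ((n.factorial : ℝ) + 1)) = ε := by field_simp
        linarith
      · rw [map_smul, hTpow m n ζ, ← hKg]
    | zero => intro ε hε; exact ⟨0, fun m _ => ⟨0, by simpa using hε, map_zero _⟩⟩
    | add x y hx hy ihx ihy =>
      intro ε hε
      obtain ⟨m₁, h1⟩ := ihx (ε/2) (by positivity)
      obtain ⟨m₂, h2⟩ := ihy (ε/2) (by positivity)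
      refine ⟨max m₁ m₂, fun m hm => ?_⟩
      obtain ⟨w₁, hw1, hw1'⟩ := h1 m (le_trans (le_max_left _ _) hm)
      obtain ⟨w₂, hw2, hw2'⟩ := h2 m (le_trans (le_max_right _ _) hm)
      exact ⟨w₁ + w₂, lt_of_le_of_lt (norm_add_le _ _) (by linarith),
        by rw [map_add, hw1', hw2']⟩
    | smul c x hx ihx =>
      intro ε hε
      obtain ⟨m₁, h1⟩ := ihx (ε/(‖c‖+1)) (by positivity)
      refine ⟨m₁, fun m hm => ?_⟩
      obtain ⟨w, hw, hw'⟩ := h1 m hm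
      refine ⟨c • w, ?_, by rw [map_smul, hw']⟩
      rw [norm_smul]
      have h3 : ‖c‖ * ‖w‖ ≤ (‖c‖+1) * ‖w‖ := by nlinarith [norm_nonneg w]
      have h4 : (‖c‖+1) * ‖w‖ < (‖c‖+1) * (ε/(‖c‖+1)) :=
        mul_lt_mul_of_pos_left hw (by positivity)
      have h5 : (‖c‖+1) * (ε/(‖c‖+1)) = ε := by field_simp
      linarith
  -- topological transitivity
  have htrans : ∀ U V : Set H, IsOpen U → IsOpen V → U.Nonempty → V.Nonempty →
      ∃ m : ℕ, ∃ z ∈ U, (T ^ m) z ∈ V := by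
    intro U V hU hV hUne hVne
    obtain ⟨u, huP, huU⟩ := hPdense.exists_mem_open hU hUne
    obtain ⟨v, hvP, hvV⟩ := hPdense.exists_mem_open hV hVne
    obtain ⟨ε, hε, hball⟩ := Metric.isOpen_iff.1 hU u huU
    obtain ⟨m₀, hm₀⟩ := hΨ u huP
    obtain ⟨m₁, hm₁⟩ := hΦ v hvP ε hε
    obtain ⟨w, hw, hw'⟩ := hm₁ (max m₀ m₁) (le_max_right _ _)
    refine ⟨max m₀ m₁, u + w, ?_, ?_⟩
    · apply hball
      rw [mem_ball_iff_norm]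
      simpa using hw
    · rw [map_add, hm₀ (max m₀ m₁) (le_max_left _ _), hw', zero_add]
      exact hvV
  have goal1 : ∃ g : H, Dense (Set.range fun m : ℕ => (T ^ m) g) := birkhoff T htrans
  -- iterated periodicity
  have hperiter : ∀ (y : H) (k j : ℕ), (T ^ k) y = y → (T ^ (k*j)) y = y := by
    intro y k j hy
    rw [pow_mul]
    induction j with
    | zero => simp
    | succ j IH => rw [pow_succ, mul_apply_eq_comp, hy, IH]
  -- periodic approximation of normalized kernels
  have hgen : ∀ (n : ℕ) (ζ : E) (ε : ℝ), 0 < ε →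
      ∃ y : H, (∃ k : ℕ, 1 ≤ k ∧ (T ^ k) y = y) ∧ ‖y - g n ζ‖ < ε := by
    intro n ζ ε hε
    obtain ⟨N, hN⟩ := hbound ((ε/2)^2/(‖ζ‖^2+1)) (by positivity)
    set k := max (n+1) (N+1) with hk
    have hk1 : 1 ≤ k := le_trans (by omega) (le_max_left _ _)
    have hkn : n < k := lt_of_lt_of_le (Nat.lt_succ_self n) (le_max_left _ _)
    have hkN : N ≤ k := le_trans (by omega) (le_max_right _ _)
    set S : ℕ → H := fun l => g (n + l*k) ζ with hSdef
    have hinj' : ∀ l₁ l₂ : ℕ, n + l₁*k = n + l₂*k → l₁ = l₂ := by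
      intro l₁ l₂ h
      have h' : l₁ * k = l₂ * k := by omega
      exact Nat.eq_of_mul_eq_mul_right (by omega) h'
    have himgsum : ∀ (f : ℕ → ℕ) (t : Finset ℕ), (∀ l₁ l₂, f l₁ = f l₂ → l₁ = l₂) →
        ∑ l ∈ t, g (f l) ζ = ∑ m' ∈ t.image f, g m' ζ := by
      intro f t hf
      rw [Finset.sum_image (fun x _ y _ h => hf x y h)]
    -- summability
    have hSsummable : Summable S := by
      rw [summable_iff_vanishing_norm]
      intro δ hδ
      obtain ⟨N', hN'⟩ := hbound (δ^2/(2*(‖ζ‖^2+1))) (by positivity)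
      refine ⟨Finset.range (N'+1), fun t ht => ?_⟩
      have hmem : ∀ m' ∈ t.image (fun l => n + l*k), N' ≤ m' := by
        intro m' hm'
        obtain ⟨l, hl, rfl⟩ := Finset.mem_image.1 hm'
        have hl1 : N' + 1 ≤ l := by
          by_contra hc
          push_neg at hc
          exact (Finset.disjoint_left.1 ht hl) (Finset.mem_range.2 hc)
        calc N' ≤ l := by omega
          _ ≤ l * k := Nat.le_mul_of_pos_right l (by omega)
          _ ≤ n + l * k := by omega
      have hb := hN' ζ _ hmem
      rw [← himgsum (fun l => n + l*k) t (fun x y h => hinj' x y h)] at hb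
      have hA : δ^2/(2*(‖ζ‖^2+1)) * ‖ζ‖^2 < δ^2 := by
        rw [div_mul_eq_mul_div, div_lt_iff₀ (by positivity)]
        nlinarith [sq_nonneg ‖ζ‖, sq_nonneg δ, pow_pos hδ 2]
      have hlt : ‖∑ l ∈ t, S l‖^2 < δ^2 := lt_of_le_of_lt hb hA
      nlinarith [norm_nonneg (∑ l ∈ t, S l), hδ, hlt]
    have hS1 : Summable (fun l => S (l+1)) := (_root_.summable_nat_add_iff 1).2 hSsummable
    have hS00 : S 0 = g n ζ := by rw [hSdef]; simp
    have hy0 : ∑' l, S l = g n ζ + ∑' l, S (l+1) := by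
      rw [Summable.tsum_eq_zero_add hSsummable, hS00]
    -- tail bound
    have htail : ‖∑' l, S (l+1)‖ ≤ ε/2 := by
      have htend : Tendsto (fun t : Finset ℕ => ‖∑ l ∈ t, S (l+1)‖) atTop (nhds ‖∑' l, S (l+1)‖) :=
        (continuous_norm.tendsto _).comp hS1.hasSum
      refine le_of_tendsto htend (Filter.Eventually.of_forall fun t => ?_)
      have hmem : ∀ m' ∈ t.image (fun l => n + (l+1)*k), N ≤ m' := by
        intro m' hm'
        obtain ⟨l, hl, rfl⟩ := Finset.mem_image.1 hm'
        calc N ≤ k := hkN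
          _ ≤ (l+1) * k := Nat.le_mul_of_pos_left k (by omega)
          _ ≤ n + (l+1) * k := by omega
      have hb := hN ζ _ hmem
      rw [← himgsum (fun l => n + (l+1)*k) t
        (fun x y h => by have := hinj' (x+1) (y+1) h; omega)] at hb
      have hA : (ε/2)^2/(‖ζ‖^2+1) * ‖ζ‖^2 ≤ (ε/2)^2 := by
        rw [div_mul_eq_mul_div, div_le_iff₀ (by positivity)]
        nlinarith [sq_nonneg ‖ζ‖, sq_nonneg (ε/2)]
      have hle : ‖∑ l ∈ t, S (l+1)‖^2 ≤ (ε/2)^2 := le_trans hb hA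
      nlinarith [norm_nonneg (∑ l ∈ t, S (l+1)), hε, hle]
    -- periodicity of the sum
    have hTS : ∀ l : ℕ, (T ^ k) (S (l+1)) = S l := by
      intro l
      have harith : n + (l+1)*k = (n + l*k) + k := by ring
      rw [hSdef]
      simp only
      rw [harith]
      exact hTpow k (n + l*k) ζ
    have hTS0 : (T ^ k) (S 0) = 0 := by
      rw [hS00]; exact hTpow0 k n hkn ζ
    refine ⟨∑' l, S l, ⟨k, hk1, ?_⟩, ?_⟩
    · calc (T ^ k) (∑' l, S l) = (T ^ k) (S 0) + (T ^ k) (∑' l, S (l+1)) := by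
            rw [Summable.tsum_eq_zero_add hSsummable, map_add]
        _ = 0 + ∑' l, (T ^ k) (S (l+1)) := by rw [hTS0, (T ^ k).map_tsum hS1]
        _ = ∑' l, S l := by rw [zero_add]; exact tsum_congr hTS
    · have : (∑' l, S l) - g n ζ = ∑' l, S (l+1) := by rw [hy0]; abel
      rw [this]
      linarith [htail]
  -- the set of periodic points approximates the span
  have hPer : ∀ u ∈ Submodule.span ℂ {x : H | ∃ (n : ℕ) (ζ : E), x = K n ζ},
      ∀ ε : ℝ, 0 < ε → ∃ y : H, (∃ k : ℕ, 1 ≤ k ∧ (T ^ k) y = y) ∧ ‖y - u‖ < ε := by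
    intro u hu'
    induction hu' using Submodule.span_induction with
    | mem x hx =>
      obtain ⟨n, ζ, rfl⟩ := hx
      intro ε hε
      obtain ⟨y, ⟨k, hk1, hk⟩, hy⟩ := hgen n ζ (ε/((n.factorial:ℝ)+1)) (by positivity)
      refine ⟨(n.factorial : ℂ) • y, ⟨k, hk1, by rw [map_smul, hk]⟩, ?_⟩
      rw [hKg n ζ, ← smul_sub, norm_smul]
      have h2 : ‖((n.factorial : ℕ) : ℂ)‖ = (n.factorial : ℝ) := by simp
      rw [h2]
      have h3 : ((n.factorial:ℝ)) * ‖y - g n ζ‖ ≤ ((n.factorial:ℝ)+1) * ‖y - g n ζ‖ := by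
        nlinarith [norm_nonneg (y - g n ζ)]
      have h4 : ((n.factorial:ℝ)+1) * ‖y - g n ζ‖
          < ((n.factorial:ℝ)+1) * (ε / ((n.factorial : ℝ) + 1)) :=
        mul_lt_mul_of_pos_left hy (by positivity)
      have h5 : ((n.factorial:ℝ)+1) * (ε / ((n.factorial : ℝ) + 1)) = ε := by field_simp
      linarith
    | zero =>
      intro ε hε
      exact ⟨0, ⟨1, le_refl 1, by simp⟩, by simpa using hε⟩
    | add x y hx hy ihx ihy =>
      intro ε hε
      obtain ⟨y₁, ⟨k₁, hk₁, hp₁⟩, hd₁⟩ := ihx (ε/2) (by positivity)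
      obtain ⟨y₂, ⟨k₂, hk₂, hp₂⟩, hd₂⟩ := ihy (ε/2) (by positivity)
      refine ⟨y₁ + y₂, ⟨k₁ * k₂, le_trans hk₁ (Nat.le_mul_of_pos_right k₁ (by omega)), ?_⟩, ?_⟩
      · have e1 := hperiter y₁ k₁ k₂ hp₁
        have e2 := hperiter y₂ k₂ k₁ hp₂
        rw [map_add, e1, mul_comm k₁ k₂, e2]
      · have heq : y₁ + y₂ - (x + y) = (y₁ - x) + (y₂ - y) := by abel
        rw [heq]
        exact lt_of_le_of_lt (norm_add_le _ _) (by linarith)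
    | smul c x hx ihx =>
      intro ε hε
      obtain ⟨y, ⟨k, hk1, hk⟩, hd⟩ := ihx (ε/(‖c‖+1)) (by positivity)
      refine ⟨c • y, ⟨k, hk1, by rw [map_smul, hk]⟩, ?_⟩
      rw [← smul_sub, norm_smul]
      have h3 : ‖c‖ * ‖y - x‖ ≤ (‖c‖+1) * ‖y - x‖ := by nlinarith [norm_nonneg (y - x)]
      have h4 : (‖c‖+1) * ‖y - x‖ < (‖c‖+1) * (ε/(‖c‖+1)) :=
        mul_lt_mul_of_pos_left hd (by positivity)
      have h5 : (‖c‖+1) * (ε/(‖c‖+1)) = ε := by field_simp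
      linarith
  refine ⟨goal1, ?_⟩
  intro x
  rw [Metric.mem_closure_iff]
  intro ε hε
  obtain ⟨u, huP, hud⟩ := Metric.mem_closure_iff.1 (hPdense x) (ε/2) (by positivity)
  obtain ⟨y, hyper, hyd⟩ := hPer u huP (ε/2) (by positivity)
  refine ⟨y, hyper, ?_⟩
  calc dist x y ≤ dist x u + dist u y := dist_triangle _ _ _
    _ < ε := by
        have : dist u y = ‖y - u‖ := by rw [dist_comm, dist_eq_norm]
        linarith [this ▸ hyd]
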